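/- Let n ≥ 2 and let A, B ∈ GL_n(ℂ) with A·B⁻¹ a pseudo-reflection. Then the group generated by A and B acts irreducibly on ℂⁿ if and only if spec(A) ∩ spec(B) = ∅. -/

import Mathlib

open Matrix Module

namespace Stmt8Aux

variable {n : ℕ}

/-- A matrix of rank at most one factors as `x ↦ φ x • u`. -/
lemma factor (M : Matrix (Fin n) (Fin n) ℂ) (h : M.rank ≤ 1) :
    ∃ (u : Fin n → ℂ) (φ : (Fin n → ℂ) → ℂ), ∀ x, M.mulVec x = φ x • u := by
  have hfin : Module.finrank ℂ ↥(LinearMap.range M.mulVecLin) ≤ 1 := h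
  have hr : Module.rank ℂ ↥(LinearMap.range M.mulVecLin) ≤ 1 := by
    rw [← finrank_eq_rank ℂ]
    exact_mod_cast hfin
  obtain ⟨v₀, hv₀⟩ := rank_le_one_iff.mp hr
  choose φ hφ using fun x => hv₀ ⟨M.mulVec x, by
    rw [← M.mulVecLin_apply]; exact LinearMap.mem_range_self _ x⟩
  refine ⟨(v₀ : Fin n → ℂ), φ, fun x => ?_⟩
  have h2 := congrArg Subtype.val (hφ x)
  simpa using h2.symm

/-- Spectrum of a matrix vs eigenvalues of the associated linear map. -/
lemma mem_spectrum_iff_hasEigenvalue (M : Matrix (Fin n) (Fin n) ℂ) (μ : ℂ) :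
    μ ∈ spectrum ℂ M ↔ Module.End.HasEigenvalue (Matrix.toLin' M) μ := by
  rw [Module.End.hasEigenvalue_iff_mem_spectrum,
    ← AlgEquiv.spectrum_eq (Matrix.toLinAlgEquiv' : Matrix (Fin n) (Fin n) ℂ ≃ₐ[ℂ] _) M]
  rfl

lemma exists_eigvec {M : Matrix (Fin n) (Fin n) ℂ} {μ : ℂ} (h : μ ∈ spectrum ℂ M) :
    ∃ x : Fin n → ℂ, x ≠ 0 ∧ M.mulVec x = μ • x := by
  obtain ⟨v, hv⟩ := ((mem_spectrum_iff_hasEigenvalue M μ).mp h).exists_hasEigenvector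
  obtain ⟨hmem, hne⟩ := Module.End.hasEigenvector_iff.mp hv
  refine ⟨v, hne, ?_⟩
  have := Module.End.mem_eigenspace_iff.mp hmem
  simpa [Matrix.toLin'_apply] using this

lemma mem_spectrum_of_eigvec {M : Matrix (Fin n) (Fin n) ℂ} {μ : ℂ} {x : Fin n → ℂ}
    (hx : x ≠ 0) (h : M.mulVec x = μ • x) : μ ∈ spectrum ℂ M :=
  (mem_spectrum_iff_hasEigenvalue M μ).mpr <| Module.End.hasEigenvalue_of_hasEigenvector <|
    Module.End.hasEigenvector_iff.mpr
      ⟨Module.End.mem_eigenspace_iff.mpr (by simpa [Matrix.toLin'_apply] using h), hx⟩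

lemma spectrum_transpose (M : Matrix (Fin n) (Fin n) ℂ) : spectrum ℂ Mᵀ = spectrum ℂ M := by
  ext μ
  rw [spectrum.mem_iff, spectrum.mem_iff, Matrix.isUnit_iff_isUnit_det,
    Matrix.isUnit_iff_isUnit_det]
  have key : (algebraMap ℂ (Matrix (Fin n) (Fin n) ℂ) μ - Mᵀ)
      = (algebraMap ℂ (Matrix (Fin n) (Fin n) ℂ) μ - M)ᵀ := by
    rw [Matrix.transpose_sub]
    congr 1
    rw [Algebra.algebraMap_eq_smul_one, Matrix.transpose_smul, Matrix.transpose_one,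
      ← Algebra.algebraMap_eq_smul_one]
  rw [key, Matrix.det_transpose]

/-- An eigenvalue of the induced endomorphism of a quotient is an eigenvalue. -/
lemma hasEigenvalue_of_quotient {V : Type*} [AddCommGroup V] [Module ℂ V]
    [FiniteDimensional ℂ V] {W : Submodule ℂ V} {f : Module.End ℂ V}
    (hf : W ≤ W.comap f) {μ : ℂ} {z : V ⧸ W} (hz0 : z ≠ 0)
    (hz : Submodule.mapQ W W f hf z = μ • z) :
    Module.End.HasEigenvalue f μ := by
  by_contra hcon
  rw [Module.End.hasEigenvalue_iff, not_not, Module.End.eigenspace_def] at hcon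
  have hinj : Function.Injective ⇑(f - μ • (1 : Module.End ℂ V)) := LinearMap.ker_eq_bot.mp hcon
  have hsurj : Function.Surjective ⇑(f - μ • (1 : Module.End ℂ V)) := LinearMap.injective_iff_surjective.mp hinj
  have hqs : Function.Surjective
      ⇑(Submodule.mapQ W W f hf - μ • (1 : Module.End ℂ (V ⧸ W))) := by
    intro q
    obtain ⟨y, rfl⟩ := W.mkQ_surjective q
    obtain ⟨x, hx⟩ := hsurj y
    refine ⟨W.mkQ x, ?_⟩
    have hx' : f x - μ • x = y := by
      simpa [LinearMap.sub_apply, LinearMap.smul_apply, Module.End.one_apply] using hx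
    have h1 : (Submodule.mapQ W W f hf) (W.mkQ x) = W.mkQ (f x) := rfl
    have h2 : W.mkQ (f x - μ • x) = W.mkQ (f x) - μ • W.mkQ x := by
      rw [map_sub, _root_.map_smul]
    simp only [LinearMap.sub_apply, LinearMap.smul_apply, Module.End.one_apply, h1]
    rw [← h2, hx']
  have hqi : Function.Injective
      ⇑(Submodule.mapQ W W f hf - μ • (1 : Module.End ℂ (V ⧸ W))) :=
    LinearMap.injective_iff_surjective.mpr hqs
  have h0 : (Submodule.mapQ W W f hf - μ • (1 : Module.End ℂ (V ⧸ W))) z = 0 := by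
    simp [LinearMap.sub_apply, LinearMap.smul_apply, Module.End.one_apply, hz]
  exact hz0 (hqi (h0.trans (map_zero _).symm))

end Stmt8Aux

open Stmt8Aux

theorem stmt_8 (n : ℕ) (hn : 2 ≤ n) (A B : Matrix (Fin n) (Fin n) ℂ)
    (hA : IsUnit A) (hB : IsUnit B)
    (hpr : (A * B⁻¹ - 1).rank = 1) :
    (∀ W : Submodule ℂ (Fin n → ℂ),
        (∀ x ∈ W, A.mulVec x ∈ W) → (∀ x ∈ W, B.mulVec x ∈ W) → W = ⊥ ∨ W = ⊤) ↔
      spectrum ℂ A ∩ spectrum ℂ B = ∅ := by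
  classical
  have hBdet : IsUnit B.det := (Matrix.isUnit_iff_isUnit_det B).mp hB
  have hAB : A - B = (A * B⁻¹ - 1) * B := by
    rw [sub_mul, one_mul, mul_assoc, Matrix.nonsing_inv_mul B hBdet, mul_one]
  have hrank : (A - B).rank ≤ 1 := by
    rw [hAB, Matrix.rank_mul_eq_left_of_isUnit_det B (A * B⁻¹ - 1) hBdet, hpr]
  obtain ⟨u, φ, hφ⟩ := factor (A - B) hrank
  have hφ' : ∀ x, A.mulVec x - B.mulVec x = φ x • u := fun x => by
    rw [← Matrix.sub_mulVec]; exact hφ x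
  have hBv : ∀ x, B.mulVec x = A.mulVec x - φ x • u := fun x => by
    rw [← hφ' x]; exact (sub_sub_cancel _ _).symm
  constructor
  · -- irreducibility → disjoint spectra
    intro hirr
    rw [Set.eq_empty_iff_forall_notMem]
    rintro μ ⟨hμA, hμB⟩
    by_cases hcase : ∃ x, x ≠ 0 ∧ A.mulVec x = μ • x ∧ φ x = 0
    · -- common eigenvector: invariant line
      obtain ⟨x, hx0, hxA, hxφ⟩ := hcase
      have hxB : B.mulVec x = μ • x := by rw [hBv x, hxφ, zero_smul, sub_zero, hxA]
      have hspan : ∀ (M : Matrix (Fin n) (Fin n) ℂ), M.mulVec x = μ • x →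
          ∀ y ∈ Submodule.span ℂ {x}, M.mulVec y ∈ Submodule.span ℂ {x} := by
        intro M hM y hy
        obtain ⟨c, rfl⟩ := Submodule.mem_span_singleton.mp hy
        rw [Matrix.mulVec_smul, hM]
        exact Submodule.smul_mem _ c (Submodule.smul_mem _ μ
          (Submodule.mem_span_singleton_self x))
      rcases hirr (Submodule.span ℂ {x}) (hspan A hxA) (hspan B hxB) with h | h
      · exact hx0 (Submodule.span_singleton_eq_bot.mp h)
      · have h1 : Module.finrank ℂ ↥(Submodule.span ℂ {x}) = 1 := finrank_span_singleton hx0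
        rw [h, finrank_top, Module.finrank_fin_fun] at h1
        omega
    · -- no such eigenvector: get invariant hyperplane from a left eigenvector
      push_neg at hcase
      obtain ⟨w, hw0, hwA⟩ := exists_eigvec (M := Aᵀ) (μ := μ)
        (by rw [spectrum_transpose]; exact hμA)
      obtain ⟨y, hy0, hyB⟩ := exists_eigvec hμB
      have hφy : φ y ≠ 0 := by
        intro h0
        have hyA : A.mulVec y = μ • y := by
          have h1 := hφ' y
          rw [h0, zero_smul, sub_eq_zero] at h1
          rw [h1, hyB]
        exact hcase y hy0 hyA h0
      have hwAv : ∀ x, w ⬝ᵥ A.mulVec x = μ * (w ⬝ᵥ x) := by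
        intro x
        rw [Matrix.dotProduct_mulVec, ← Matrix.mulVec_transpose, hwA, smul_dotProduct,
          smul_eq_mul]
      have hwu : w ⬝ᵥ u = 0 := by
        have h1 : w ⬝ᵥ (A.mulVec y - B.mulVec y) = φ y * (w ⬝ᵥ u) := by
          rw [hφ' y, dotProduct_smul, smul_eq_mul]
        have h2 : w ⬝ᵥ (A.mulVec y - B.mulVec y) = 0 := by
          rw [dotProduct_sub, hwAv y, hyB, dotProduct_smul, smul_eq_mul, sub_self]
        rw [h2] at h1
        exact (mul_eq_zero.mp h1.symm).resolve_left hφy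
      set ℓ : (Fin n → ℂ) →ₗ[ℂ] ℂ :=
        { toFun := fun x => w ⬝ᵥ x
          map_add' := fun x y => dotProduct_add w x y
          map_smul' := fun c x => by simp [dotProduct_smul] } with hℓ
      have hℓapp : ∀ x, ℓ x = w ⬝ᵥ x := fun x => rfl
      have hAW : ∀ x ∈ LinearMap.ker ℓ, A.mulVec x ∈ LinearMap.ker ℓ := by
        intro x hx
        have hx' : w ⬝ᵥ x = 0 := hx
        rw [LinearMap.mem_ker, hℓapp, hwAv x, hx', mul_zero]
      have hBW : ∀ x ∈ LinearMap.ker ℓ, B.mulVec x ∈ LinearMap.ker ℓ := by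
        intro x hx
        have hx' : w ⬝ᵥ x = 0 := hx
        rw [LinearMap.mem_ker, hℓapp, hBv x, dotProduct_sub, hwAv x, hx', mul_zero,
          dotProduct_smul, smul_eq_mul, hwu, mul_zero, sub_zero]
      obtain ⟨i, hi⟩ : ∃ i, w i ≠ 0 := by
        by_contra h
        push_neg at h
        exact hw0 (funext h)
      obtain ⟨j, hj⟩ := Fintype.exists_ne_of_one_lt_card
        (by rw [Fintype.card_fin]; omega) i
      set z : Fin n → ℂ := w j • (Pi.single i (1 : ℂ) : Fin n → ℂ) - w i • (Pi.single j (1 : ℂ) : Fin n → ℂ) with hzdef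
      have hzW : z ∈ LinearMap.ker ℓ := by
        rw [LinearMap.mem_ker, hℓapp, hzdef, dotProduct_sub, dotProduct_smul,
          dotProduct_smul, dotProduct_single, dotProduct_single,
          smul_eq_mul, smul_eq_mul, mul_one, mul_one, mul_comm, sub_self]
      have hz0 : z ≠ 0 := by
        intro h
        have hzj : z j = 0 := by rw [h]; rfl
        rw [hzdef] at hzj
        simp only [Pi.sub_apply, Pi.smul_apply, Pi.single_eq_same,
          Pi.single_eq_of_ne hj, smul_eq_mul, mul_zero, mul_one, zero_sub, neg_eq_zero] at hzj
        exact hi hzj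
      rcases hirr (LinearMap.ker ℓ) hAW hBW with h | h
      · rw [h, Submodule.mem_bot] at hzW
        exact hz0 hzW
      · have hmem : Pi.single i (1 : ℂ) ∈ LinearMap.ker ℓ := by rw [h]; trivial
        rw [LinearMap.mem_ker, hℓapp, dotProduct_single, mul_one] at hmem
        exact hi hmem
  · -- disjoint spectra → irreducibility
    intro hspec W hWA hWB
    by_contra hW
    push_neg at hW
    obtain ⟨hWbot, hWtop⟩ := hW
    have hfAW : ∀ x ∈ W, Matrix.toLin' A x ∈ W := fun x hx => by
      rw [Matrix.toLin'_apply]; exact hWA x hx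
    have hfBW : ∀ x ∈ W, Matrix.toLin' B x ∈ W := fun x hx => by
      rw [Matrix.toLin'_apply]; exact hWB x hx
    by_cases hcase : ∀ x ∈ W, φ x = 0
    · -- A and B agree on W; take an eigenvector of the restriction
      haveI : Nontrivial W := Submodule.nontrivial_iff_ne_bot.mpr hWbot
      obtain ⟨μ, hμ⟩ := Module.End.exists_eigenvalue ((Matrix.toLin' A).restrict hfAW)
      obtain ⟨zz, hzz⟩ := hμ.exists_hasEigenvector
      obtain ⟨hmem, hne⟩ := Module.End.hasEigenvector_iff.mp hzz
      have hzA : A.mulVec (zz : Fin n → ℂ) = μ • (zz : Fin n → ℂ) := by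
        have h1 := Module.End.mem_eigenspace_iff.mp hmem
        have h2 := congrArg Subtype.val h1
        rw [LinearMap.restrict_coe_apply] at h2
        simpa [Matrix.toLin'_apply] using h2
      have hz0 : (zz : Fin n → ℂ) ≠ 0 := by
        intro h
        exact hne (Subtype.ext h)
      have hzB : B.mulVec (zz : Fin n → ℂ) = μ • (zz : Fin n → ℂ) := by
        rw [hBv, hcase _ zz.2, zero_smul, sub_zero, hzA]
      exact (Set.eq_empty_iff_forall_notMem.mp hspec μ)
        ⟨mem_spectrum_of_eigvec hz0 hzA, mem_spectrum_of_eigvec hz0 hzB⟩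
    · -- A and B agree on the quotient by W
      push_neg at hcase
      obtain ⟨x₀, hx₀W, hx₀φ⟩ := hcase
      have huW : u ∈ W := by
        have h1 : A.mulVec x₀ - B.mulVec x₀ ∈ W :=
          Submodule.sub_mem W (hWA x₀ hx₀W) (hWB x₀ hx₀W)
        rw [hφ' x₀] at h1
        have h2 := Submodule.smul_mem W (φ x₀)⁻¹ h1
        rwa [smul_smul, inv_mul_cancel₀ hx₀φ, one_smul] at h2
      have hle : W ≤ W.comap (Matrix.toLin' A) := fun x hx => hfAW x hx
      have hleB : W ≤ W.comap (Matrix.toLin' B) := fun x hx => hfBW x hx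
      haveI : Nontrivial ((Fin n → ℂ) ⧸ W) :=
        Submodule.Quotient.nontrivial_iff.mpr hWtop
      obtain ⟨μ, hμ⟩ := Module.End.exists_eigenvalue
        (Submodule.mapQ W W (Matrix.toLin' A) hle)
      obtain ⟨q, hq⟩ := hμ.exists_hasEigenvector
      obtain ⟨hqmem, hq0⟩ := Module.End.hasEigenvector_iff.mp hq
      have hqA : Submodule.mapQ W W (Matrix.toLin' A) hle q = μ • q :=
        Module.End.mem_eigenspace_iff.mp hqmem
      have hμA : Module.End.HasEigenvalue (Matrix.toLin' A) μ :=
        hasEigenvalue_of_quotient hle hq0 hqA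
      have hqB : Submodule.mapQ W W (Matrix.toLin' B) hleB q = μ • q := by
        obtain ⟨x, rfl⟩ := W.mkQ_surjective q
        have hu0 : W.mkQ u = 0 := by
          rw [Submodule.mkQ_apply, Submodule.Quotient.mk_eq_zero]
          exact huW
        have hBx : Matrix.toLin' B x = Matrix.toLin' A x - φ x • u := by
          rw [Matrix.toLin'_apply, Matrix.toLin'_apply, hBv x]
        calc Submodule.mapQ W W (Matrix.toLin' B) hleB (W.mkQ x)
            = W.mkQ (Matrix.toLin' B x) := rfl
          _ = W.mkQ (Matrix.toLin' A x) - φ x • W.mkQ u := by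
              rw [hBx, map_sub, _root_.map_smul]
          _ = W.mkQ (Matrix.toLin' A x) := by rw [hu0, smul_zero, sub_zero]
          _ = Submodule.mapQ W W (Matrix.toLin' A) hle (W.mkQ x) := rfl
          _ = μ • W.mkQ x := hqA
      have hμB : Module.End.HasEigenvalue (Matrix.toLin' B) μ :=
        hasEigenvalue_of_quotient hleB hq0 hqB
      exact (Set.eq_empty_iff_forall_notMem.mp hspec μ)
        ⟨(mem_spectrum_iff_hasEigenvalue A μ).mpr hμA,
         (mem_spectrum_iff_hasEigenvalue B μ).mpr hμB⟩
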